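/- Let G be a graph on n vertices and let k be a natural number. Let G*_k be the graph obtained from G by replacing each vertex v with an iterated balanced blow-up of C5 on 5^k vertices, joining every vertex of the class of u to every vertex of the class of v when uv ∈ E(G), and adding no edges between the classes of u and v when uv ∉ E(G). Then c5(G*_k) = n·N(5^k) + 5^{5k}·c5(G). -/

import Mathlib

/-- The 5-cycle on `Fin 5`. -/
def C5 : SimpleGraph (Fin 5) := SimpleGraph.fromRel (fun i j => j = i + 1)

/-- The number of induced copies of `H` in `G`. -/
noncomputable def inducedCopies {U V : Type} [Fintype U] [Fintype V]
    (H : SimpleGraph U) (G : SimpleGraph V) : ℕ :=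
  Nat.card {s : Finset V // s.card = Fintype.card U ∧
    Nonempty (G.induce (s : Set V) ≃g H)}

/-- The number of induced copies of the 5-cycle in `G`. -/
noncomputable def c5 {V : Type} [Fintype V] (G : SimpleGraph V) : ℕ :=
  inducedCopies C5 G

/-- Depth-bounded iterated balanced blow-up. -/
def iterAux {U : Type} [Fintype U] (H : SimpleGraph U) :
    ℕ → ∀ (W : Type), SimpleGraph W → Prop
  | 0, W, _ => Nat.card W < Fintype.card U
  | (k+1), W, G =>
      Nat.card W < Fintype.card U ∨
        ∃ P : W → U, Function.Surjective P ∧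
          (∀ w w' : W, P w ≠ P w' → (G.Adj w w' ↔ H.Adj (P w) (P w'))) ∧
          (∀ u v : U, Nat.card {w : W // P w = u} ≤ Nat.card {w : W // P w = v} + 1) ∧
          ∀ u : U, iterAux H k ↥{w : W | P w = u} (G.induce {w : W | P w = u})

/-- `G` is an iterated balanced blow-up of `H`. -/
def IsIterBalancedBlowupOf {U : Type} [Fintype U] (H : SimpleGraph U)
    {W : Type} (G : SimpleGraph W) : Prop :=
  ∃ k : ℕ, iterAux H k W G

/-- `N n` is the number of induced 5-cycles in an iterated balanced blow-up of `C5`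
on `n` vertices. -/
def N : ℕ → ℕ
  | n =>
    if h : n ≤ 4 then 0
    else (n / 5) ^ (5 - n % 5) * (n / 5 + 1) ^ (n % 5)
      + (5 - n % 5) * N (n / 5) + (n % 5) * N (n / 5 + 1)
termination_by n => n
decreasing_by all_goals omega


-- ===================== auxiliary development =====================

set_option linter.unusedSectionVars false

instance : DecidableRel C5.Adj := fun i j =>
  decidable_of_iff' _ (SimpleGraph.fromRel_adj _ i j)

lemma c5_no_module : ∀ M : Finset (Fin 5), 2 ≤ M.card → M.card ≤ 4 →
    ∃ z, z ∉ M ∧ ∃ a ∈ M, ∃ b ∈ M, C5.Adj z a ∧ ¬ C5.Adj z b := by unfold C5; decide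

lemma const_or_inj {U : Type} (Q : U → U → Prop) (f : Fin 5 → U)
    (compat : ∀ i j, f i ≠ f j → (C5.Adj i j ↔ Q (f i) (f j))) :
    (∀ i j, f i = f j) ∨ Function.Injective f := by
  by_contra h
  push_neg at h
  obtain ⟨⟨i0, j0, hne⟩, hninj⟩ := h
  rw [Function.not_injective_iff] at hninj
  obtain ⟨a, b, hfab, hab⟩ := hninj
  classical
  set M : Finset (Fin 5) := Finset.univ.filter (fun x => f x = f a) with hM
  have ha : a ∈ M := by simp [hM]
  have hb : b ∈ M := by simp [hM, hfab]
  have h2 : 2 ≤ M.card := Finset.one_lt_card.mpr ⟨a, ha, b, hb, hab⟩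
  have h4 : M.card ≤ 4 := by
    by_contra hc
    have h5 : M = Finset.univ := by
      apply Finset.eq_univ_of_card
      have := M.card_le_univ
      simp only [Fintype.card_fin, Finset.card_univ] at *
      omega
    have hi0 : i0 ∈ M := h5 ▸ Finset.mem_univ _
    have hj0 : j0 ∈ M := h5 ▸ Finset.mem_univ _
    simp only [hM, Finset.mem_filter] at hi0 hj0
    exact hne (hi0.2.trans hj0.2.symm)
  obtain ⟨z, hz, x, hx, y, hy, hadjx, hadjy⟩ := c5_no_module M h2 h4
  simp only [hM, Finset.mem_filter, Finset.mem_univ, true_and] at hz hx hy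
  replace hz : f z ≠ f a := hz
  have h1 := compat z x (hx ▸ hz)
  have h2' := compat z y (hy ▸ hz)
  rw [hx] at h1; rw [hy] at h2'
  exact hadjy (h2'.mpr (h1.mp hadjx))

noncomputable section

variable {V U V' : Type}

/-- structure lemma -/
lemma copy_const_or_injOn (G : SimpleGraph V) (H : SimpleGraph U) (P : V → U)
    (compat : ∀ w w', P w ≠ P w' → (G.Adj w w' ↔ H.Adj (P w) (P w')))
    (s : Finset V) (e : G.induce (s : Set V) ≃g C5) :
    (∀ w ∈ s, ∀ w' ∈ s, P w = P w') ∨ Set.InjOn P (s : Set V) := by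
  set f : Fin 5 → U := fun i => P ((e.symm i) : V) with hf
  have compat' : ∀ i j, f i ≠ f j → (C5.Adj i j ↔ H.Adj (f i) (f j)) := by
    intro i j hij
    have h1 : (G.induce (s : Set V)).Adj (e.symm i) (e.symm j) ↔ C5.Adj i j :=
      e.symm.map_rel_iff
    have h2 : (G.induce (s : Set V)).Adj (e.symm i) (e.symm j) ↔
        G.Adj ((e.symm i) : V) ((e.symm j) : V) := Iff.rfl
    rw [← h1, h2]
    exact compat _ _ hij
  rcases const_or_inj H.Adj f compat' with hc | hi
  · left
    intro w hw w' hw'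
    have h1 : P w = f (e ⟨w, hw⟩) := by simp [hf]
    have h2 : P w' = f (e ⟨w', hw'⟩) := by simp [hf]
    rw [h1, h2]; exact hc _ _
  · right
    intro w hw w' hw' hP
    have h1 : f (e ⟨w, hw⟩) = f (e ⟨w', hw'⟩) := by simpa [hf] using hP
    have := hi h1
    have := e.injective.eq_iff.mp (by exact this)
    exact congrArg Subtype.val this

noncomputable section

/-- iso between induced graphs along a graph iso -/
def induceIsoOfIso {G : SimpleGraph V} {G' : SimpleGraph V'} (φ : G ≃g G') (A : Set V) :
    G.induce A ≃g G'.induce (φ '' A) where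
  toFun w := ⟨φ w.1, ⟨w.1, w.2, rfl⟩⟩
  invFun w := ⟨φ.symm w.1, by obtain ⟨x, hx, hxe⟩ := w.2; simpa [← hxe] using hx⟩
  left_inv w := by simp
  right_inv w := by simp
  map_rel_iff' {a b} := by
    show G'.Adj (φ a) (φ b) ↔ G.Adj a b
    exact φ.map_rel_iff

/-- composition of induces -/
def induceInduceIso (G : SimpleGraph V) (A : Set V) (B : Set A) :
    (G.induce A).induce B ≃g G.induce (Subtype.val '' B) where
  toEquiv := Equiv.Set.image Subtype.val B Subtype.val_injective
  map_rel_iff' {a b} := by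
    show G.Adj _ _ ↔ G.Adj _ _
    simp [Equiv.Set.image, Equiv.Set.imageOfInjOn]

/-- transversal iso -/
def transversalIso (G : SimpleGraph V) (H : SimpleGraph U) (P : V → U)
    (compat : ∀ w w', P w ≠ P w' → (G.Adj w w' ↔ H.Adj (P w) (P w')))
    (s : Finset V) [DecidableEq U] (hinj : Set.InjOn P (s : Set V)) :
    G.induce (s : Set V) ≃g H.induce ((s.image P : Finset U) : Set U) where
  toEquiv := by
    apply Equiv.ofBijective (f := fun w : (s : Set V) =>
      (⟨P w.1, by simp; exact ⟨w.1, w.2, rfl⟩⟩ : ((s.image P : Finset U) : Set U)))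
    constructor
    · intro a b hab
      exact Subtype.ext (hinj a.2 b.2 (congrArg Subtype.val hab))
    · rintro ⟨u, hu⟩
      simp only [Finset.coe_image, Set.mem_image, Finset.mem_coe] at hu
      obtain ⟨w, hw, hwu⟩ := hu
      exact ⟨⟨w, hw⟩, Subtype.ext hwu⟩
  map_rel_iff' {a b} := by
    simp only [Equiv.ofBijective_apply, SimpleGraph.comap_adj, Function.Embedding.coe_subtype]
    by_cases hab : a = b
    · subst hab; simp
    · have hne : (a : V) ≠ (b : V) := fun h => hab (Subtype.ext h)
      have hPne : P a ≠ P b := fun h => hne (hinj a.2 b.2 h)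
      exact (compat _ _ hPne).symm

def induceCongrSet (G : SimpleGraph V) {A B : Set V} (h : A = B) :
    G.induce A ≃g G.induce B := by subst h; rfl

def Copies (G : SimpleGraph V) : Type :=
  {s : Finset V // s.card = 5 ∧ Nonempty (G.induce (s : Set V) ≃g C5)}

lemma c5_eq_card_copies [Fintype V] (G : SimpleGraph V) :
    c5 G = Nat.card (Copies G) :=
  Nat.card_congr (Equiv.subtypeEquivRight (fun s => by rw [Fintype.card_fin]))

instance copiesFinite [Finite V] (G : SimpleGraph V) : Finite (Copies G) := by
  unfold Copies
  haveI := Fintype.ofFinite V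
  infer_instance

lemma c5_iso [Fintype V] [Fintype V'] {G : SimpleGraph V} {G' : SimpleGraph V'}
    (φ : G ≃g G') : c5 G = c5 G' := by
  classical
  rw [c5_eq_card_copies, c5_eq_card_copies]
  apply Nat.card_congr
  refine Equiv.subtypeEquiv (Equiv.finsetCongr φ.toEquiv) (fun s => ?_)
  simp only [Equiv.finsetCongr_apply]
  have hco : ((s.map φ.toEquiv.toEmbedding : Finset V') : Set V') = φ '' (s : Set V) := by
    simp [Finset.coe_map]
  constructor
  · rintro ⟨h5, ⟨e⟩⟩
    refine ⟨by rw [Finset.card_map]; exact h5, ⟨?_⟩⟩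
    exact ((induceCongrSet G' hco).trans ((induceIsoOfIso φ (s : Set V)).symm)).trans e
  · rintro ⟨h5, ⟨e⟩⟩
    refine ⟨by rw [Finset.card_map] at h5; exact h5, ⟨?_⟩⟩
    exact ((induceIsoOfIso φ (s : Set V)).trans (induceCongrSet G' hco.symm)).trans e

lemma natCard_sigma {ι : Type} [Fintype ι] (F : ι → Type) [∀ i, Finite (F i)] :
    Nat.card ((i : ι) × F i) = ∑ i, Nat.card (F i) := by
  letI : ∀ i, Fintype (F i) := fun i => Fintype.ofFinite _
  simp [Nat.card_eq_fintype_card]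

lemma c5_eq_zero_of_small [Fintype V] (G : SimpleGraph V) (h : Fintype.card V < 5) :
    c5 G = 0 := by
  rw [c5_eq_card_copies]
  rw [Nat.card_eq_zero]
  left
  constructor
  rintro ⟨s, h5, -⟩
  have := Finset.card_le_univ s
  rw [h5] at this
  omega

section Decomp
variable [Fintype V] [DecidableEq V] [Fintype U] [DecidableEq U]
variable (G : SimpleGraph V) (H : SimpleGraph U) (P : V → U)
variable (compat : ∀ w w', P w ≠ P w' → (G.Adj w w' ↔ H.Adj (P w) (P w')))

lemma image_P_attach (t : Finset U) (c : (u : {u' // u' ∈ t}) → {w : V // P w = u.1}) :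
    (t.attach.image fun u => (c u).1).image P = t := by
  rw [Finset.image_image]
  have h3 : (P ∘ fun u : {u' // u' ∈ t} => (c u).1) = fun u => u.1 :=
    funext fun u => (c u).2
  rw [h3, Finset.attach_image_val]

/-- The forward map of the decomposition. -/
def decompFun :
    ((u : U) × Copies (G.induce {w | P w = u})) ⊕
      ((t : Copies H) × ((u : {u' // u' ∈ t.1}) → {w : V // P w = u.1})) → Copies G
  | Sum.inl ⟨u, s', hs5, hne⟩ =>
    ⟨s'.image Subtype.val,
      by rw [Finset.card_image_of_injective _ Subtype.val_injective]; exact hs5,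
      hne.map (fun e =>
        ((induceCongrSet G (Finset.coe_image)).trans
          (induceInduceIso G {w | P w = u}
            ((s' : Finset ↥{w | P w = u}) : Set ↥{w | P w = u})).symm).trans e)⟩
  | Sum.inr ⟨⟨t, ht5, htne⟩, c⟩ =>
    ⟨t.attach.image (fun u => (c u).1),
      by
        have hinj : Function.Injective (fun u : {u' // u' ∈ t} => (c u).1) := by
          intro a b hab
          have h2 : P (c a).1 = P (c b).1 := by simp only at hab; rw [hab]
          rw [(c a).2, (c b).2] at h2
          exact Subtype.ext h2
        rw [Finset.card_image_of_injective _ hinj, Finset.card_attach]; exact ht5,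
      by
        have himg : (t.attach.image fun u => (c u).1).image P = t :=
          image_P_attach P t c
        have hinjOn : Set.InjOn P ((t.attach.image fun u => (c u).1 : Finset V) : Set V) := by
          intro a ha b hb hP
          simp only [Finset.coe_image, Set.mem_image, Finset.mem_coe] at ha hb
          obtain ⟨ua, -, rfl⟩ := ha
          obtain ⟨ub, -, rfl⟩ := hb
          rw [(c ua).2, (c ub).2] at hP
          rw [Subtype.ext hP]
        exact htne.map (fun eH =>
          (transversalIso G H P compat _ hinjOn).trans
            ((induceCongrSet H (by rw [himg])).trans eH))⟩


lemma decompFun_injective : Function.Injective (decompFun G H P compat) := by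
  rintro (⟨u, s', hs5, hne⟩ | ⟨⟨t, ht5, htne⟩, c⟩)
    (⟨u2, s2, hs52, hne2⟩ | ⟨⟨t2, ht52, htne2⟩, c2⟩) h <;>
    replace h := congrArg Subtype.val h <;>
    simp only [decompFun] at h
  · -- inl inl
    have hsne : s'.Nonempty := Finset.card_pos.mp (by omega)
    obtain ⟨w, hw⟩ := hsne
    have hmem : (w : V) ∈ s2.image Subtype.val := by
      rw [← h]; exact Finset.mem_image_of_mem _ hw
    obtain ⟨w2, hw2, hww⟩ := Finset.mem_image.mp hmem
    have huu : u = u2 := by rw [← w.2, ← w2.2, hww]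
    subst huu
    have hss : s' = s2 := Finset.image_injective Subtype.val_injective h
    subst hss
    rfl
  · -- inl inr : contradiction
    exfalso
    have h1 : ((s'.image Subtype.val).image P).card ≤ 1 := by
      apply Finset.card_le_one.mpr
      intro a ha b hb
      obtain ⟨xa, hxa, hxa'⟩ := Finset.mem_image.mp ha
      obtain ⟨wa, -, hwa⟩ := Finset.mem_image.mp hxa
      obtain ⟨xb, hxb, hxb'⟩ := Finset.mem_image.mp hb
      obtain ⟨wb, -, hwb⟩ := Finset.mem_image.mp hxb
      rw [← hxa', ← hwa, wa.2, ← hxb', ← hwb, wb.2]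
    rw [h, image_P_attach P t2 c2, ht52] at h1
    omega
  · -- inr inl : contradiction
    exfalso
    have h1 : ((s2.image Subtype.val).image P).card ≤ 1 := by
      apply Finset.card_le_one.mpr
      intro a ha b hb
      obtain ⟨xa, hxa, hxa'⟩ := Finset.mem_image.mp ha
      obtain ⟨wa, -, hwa⟩ := Finset.mem_image.mp hxa
      obtain ⟨xb, hxb, hxb'⟩ := Finset.mem_image.mp hb
      obtain ⟨wb, -, hwb⟩ := Finset.mem_image.mp hxb
      rw [← hxa', ← hwa, wa.2, ← hxb', ← hwb, wb.2]
    rw [← h, image_P_attach P t c, ht5] at h1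
    omega
  · -- inr inr
    have htt : t = t2 := by
      rw [← image_P_attach P t c, ← image_P_attach P t2 c2, h]
    subst htt
    have hcc : c = c2 := by
      funext u
      have hmem : (c u).1 ∈ t.attach.image (fun u => (c2 u).1) := by
        rw [← h]; exact Finset.mem_image_of_mem _ (Finset.mem_attach _ u)
      obtain ⟨u', -, hu'⟩ := Finset.mem_image.mp hmem
      have : u' = u := by
        apply Subtype.ext
        rw [← (c2 u').2, hu', (c u).2]
      apply Subtype.ext
      rw [← hu', this]
    subst hcc
    rfl

lemma decompFun_surjective : Function.Surjective (decompFun G H P compat) := by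
  rintro ⟨s, h5, hne⟩
  obtain ⟨e⟩ := hne
  rcases copy_const_or_injOn G H P compat s e with hconst | hinj
  · -- constant case
    have hsne : s.Nonempty := Finset.card_pos.mp (by omega)
    obtain ⟨w0, hw0⟩ := hsne
    set u := P w0 with hu
    set s' : Finset ↥{w : V | P w = u} := s.subtype (fun w => w ∈ {w : V | P w = u}) with hs'
    have himgval : s'.image Subtype.val = s := by
      ext w
      constructor
      · intro hw
        obtain ⟨w', hw', rfl⟩ := Finset.mem_image.mp hw
        exact Finset.mem_subtype.mp hw'
      · intro hw
        exact Finset.mem_image.mpr ⟨⟨w, hconst w hw w0 hw0⟩, Finset.mem_subtype.mpr hw, rfl⟩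
    refine ⟨Sum.inl ⟨u, ⟨s', ?_, ?_⟩⟩, ?_⟩
    · rw [← himgval, Finset.card_image_of_injective _ Subtype.val_injective] at h5
      exact h5
    · refine ⟨(induceInduceIso G {w : V | P w = u} (s' : Set ↥{w : V | P w = u})).trans
        ((induceCongrSet G ?_).trans e)⟩
      rw [← Finset.coe_image, himgval]
    · exact Subtype.ext himgval
  · -- injective case
    set t : Finset U := s.image P with ht
    have ht5 : t.card = 5 := by rw [ht, Finset.card_image_of_injOn hinj, h5]
    have htne : Nonempty (H.induce (t : Set U) ≃g C5) :=
      ⟨(transversalIso G H P compat s hinj).symm.trans e⟩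
    have huniq : ∀ u : {u' // u' ∈ t}, ∃! w, w ∈ s ∧ P w = u.1 := by
      intro u
      obtain ⟨w, hw, hPw⟩ := Finset.mem_image.mp u.2
      exact ⟨w, ⟨hw, hPw⟩, fun y hy => hinj hy.1 hw (hy.2.trans hPw.symm)⟩
    set c : (u : {u' // u' ∈ t}) → {w : V // P w = u.1} :=
      fun u => ⟨s.choose (fun w => P w = u.1) (huniq u),
        s.choose_property (fun w => P w = u.1) (huniq u)⟩ with hc
    refine ⟨Sum.inr ⟨⟨t, ht5, htne⟩, c⟩, ?_⟩
    apply Subtype.ext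
    show t.attach.image (fun u => (c u).1) = s
    symm
    apply Finset.eq_of_subset_of_card_le
    · intro w hw
      have hu : P w ∈ t := Finset.mem_image_of_mem P hw
      apply Finset.mem_image.mpr
      refine ⟨⟨P w, hu⟩, Finset.mem_attach _ _, ?_⟩
      show s.choose (fun w' => P w' = P w) _ = w
      have hcs := s.choose_spec (fun w' => P w' = P w) (huniq ⟨P w, hu⟩)
      exact hinj hcs.1 hw hcs.2
    · rw [h5]
      calc (t.attach.image fun u => (c u).1).card ≤ t.attach.card := Finset.card_image_le
        _ = 5 := by rw [Finset.card_attach, ht5]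

include compat in
lemma decomp : c5 G = (∑ u : U, c5 (G.induce {w | P w = u}))
    + Nat.card ((t : Copies H) × ((u : {u' // u' ∈ t.1}) → {w : V // P w = u.1})) := by
  rw [c5_eq_card_copies,
    ← Nat.card_congr (Equiv.ofBijective _ ⟨decompFun_injective G H P compat,
      decompFun_surjective G H P compat⟩),
    Nat.card_sum]
  congr 1
  rw [natCard_sigma]
  exact Finset.sum_congr rfl (fun u _ => (c5_eq_card_copies _).symm)

end Decomp

lemma N_small {m : ℕ} (h : m ≤ 4) : N m = 0 := by rw [N]; simp [h]

lemma N_rec {m : ℕ} (h : 5 ≤ m) : N m = (m / 5) ^ (5 - m % 5) * (m / 5 + 1) ^ (m % 5)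
    + (5 - m % 5) * N (m / 5) + (m % 5) * N (m / 5 + 1) := by
  rw [N]; rw [dif_neg (by omega)]

lemma copiesC5_val (t : Copies C5) : t.1 = Finset.univ := by
  apply (Finset.card_eq_iff_eq_univ _).mp
  rw [t.2.1]; simp

instance : Unique (Copies C5) where
  default := ⟨Finset.univ, by simp,
    ⟨(induceCongrSet C5 (by simp)).trans (SimpleGraph.induceUnivIso C5)⟩⟩
  uniq t := Subtype.ext (copiesC5_val t)

/-- count of copies in an iterated balanced blowup of C5 -/
lemma inner_count : ∀ (kd : ℕ) (W : Type) [Fintype W] (G : SimpleGraph W),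
    iterAux C5 kd W G → c5 G = N (Nat.card W) := by
  intro kd
  induction kd with
  | zero =>
    intro W _ G h
    simp only [iterAux, Fintype.card_fin] at h
    rw [Nat.card_eq_fintype_card] at h ⊢
    rw [c5_eq_zero_of_small G h, N_small (by omega)]
  | succ kd ih =>
    intro W _ G h
    simp only [iterAux, Fintype.card_fin] at h
    rcases h with hsmall | ⟨P, hsurj, compat, hbal, hrec⟩
    · rw [Nat.card_eq_fintype_card] at hsmall ⊢
      rw [c5_eq_zero_of_small G hsmall, N_small (by omega)]
    · classical
      set m := Nat.card W with hm
      have hm5 : 5 ≤ m := by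
        rw [hm, Nat.card_eq_fintype_card]
        simpa using Fintype.card_le_of_surjective P hsurj
      set sz : Fin 5 → ℕ := fun u => Nat.card {w : W // P w = u} with hsz
      -- each fiber count
      have hterm : ∀ u, c5 (G.induce {w | P w = u}) = N (sz u) :=
        fun u => ih _ _ (hrec u)
      -- sum of sizes
      have hsum : ∑ u, sz u = m := by
        rw [hm, ← Nat.card_congr (Equiv.sigmaFiberEquiv P)]
        exact (natCard_sigma (fun u => {w : W // P w = u})).symm
      -- balanced sizes
      obtain ⟨u0, -, hmin⟩ := Finset.exists_min_image Finset.univ sz ⟨0, Finset.mem_univ 0⟩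
      set c := sz u0 with hc
      have hub : ∀ u, sz u ≤ c + 1 := fun u => hbal u u0
      have hlb : ∀ u, c ≤ sz u := fun u => hmin u (Finset.mem_univ u)
      set a := (Finset.univ.filter (fun u => sz u = c + 1)).card with ha
      have ha5 : a ≤ 5 := by
        rw [ha]
        calc (Finset.univ.filter (fun u => sz u = c + 1)).card
            ≤ (Finset.univ : Finset (Fin 5)).card := Finset.card_filter_le _ _
          _ = 5 := by simp
      have hcardsplit := Finset.card_filter_add_card_filter_not
        (s := (Finset.univ : Finset (Fin 5))) (p := fun u => sz u = c + 1)
      simp only [Finset.card_univ, Fintype.card_fin] at hcardsplit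
      have hsum2 : ∑ u, sz u = a * (c + 1) + (5 - a) * c := by
        rw [← Finset.sum_filter_add_sum_filter_not Finset.univ (fun u => sz u = c + 1)]
        congr 1
        · rw [Finset.sum_congr rfl (fun u hu => (Finset.mem_filter.mp hu).2),
            Finset.sum_const, smul_eq_mul, ha]
        · have : ∀ u ∈ Finset.univ.filter (fun u => ¬ sz u = c + 1), sz u = c := by
            intro u hu
            have h1 := (Finset.mem_filter.mp hu).2
            have := hub u; have := hlb u
            omega
          rw [Finset.sum_congr rfl this, Finset.sum_const, smul_eq_mul]
          congr 1
          omega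
      have hprod : ∏ u, sz u = (c + 1) ^ a * c ^ (5 - a) := by
        rw [← Finset.prod_filter_mul_prod_filter_not Finset.univ (fun u => sz u = c + 1)]
        congr 1
        · rw [Finset.prod_congr rfl (fun u hu => (Finset.mem_filter.mp hu).2),
            Finset.prod_const, ha]
        · have : ∀ u ∈ Finset.univ.filter (fun u => ¬ sz u = c + 1), sz u = c := by
            intro u hu
            have h1 := (Finset.mem_filter.mp hu).2
            have := hub u; have := hlb u
            omega
          rw [Finset.prod_congr rfl this, Finset.prod_const]
          congr 1
          omega
      have hNsum : ∑ u, N (sz u) = a * N (c + 1) + (5 - a) * N c := by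
        rw [← Finset.sum_filter_add_sum_filter_not Finset.univ (fun u => sz u = c + 1)]
        congr 1
        · rw [Finset.sum_congr rfl
            (fun u hu => congrArg N (Finset.mem_filter.mp hu).2),
            Finset.sum_const, smul_eq_mul, ha]
        · have : ∀ u ∈ Finset.univ.filter (fun u => ¬ sz u = c + 1), N (sz u) = N c := by
            intro u hu
            have h1 := (Finset.mem_filter.mp hu).2
            have h2 := hub u; have h3 := hlb u
            congr 1
            omega
          rw [Finset.sum_congr rfl this, Finset.sum_const, smul_eq_mul]
          congr 1
          omega
      -- the transversal count
      have htrans : Nat.card ((t : Copies C5) ×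
          ((u : {u' // u' ∈ t.1}) → {w : W // P w = u.1})) = ∏ u, sz u := by
        haveI : Fintype (Copies C5) := Fintype.ofFinite _
        rw [natCard_sigma]
        have hper : ∀ t : Copies C5,
            Nat.card ((u : {u' // u' ∈ t.1}) → {w : W // P w = u.1}) = ∏ u, sz u := by
          intro t
          rw [Nat.card_pi]
          rw [show (∏ u : {u' // u' ∈ t.1}, Nat.card {w : W // P w = u.1})
              = ∏ u ∈ t.1, Nat.card {w : W // P w = u} from
              Finset.prod_coe_sort t.1 (fun u => Nat.card {w : W // P w = u})]
          rw [copiesC5_val t]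
        rw [Finset.sum_congr rfl (fun t _ => hper t), Finset.sum_const, smul_eq_mul,
          Finset.card_univ, Fintype.card_unique, one_mul]
      -- assemble
      rw [decomp G C5 P compat, htrans,
        Finset.sum_congr rfl (fun u _ => hterm u), hNsum, hprod, N_rec hm5]
      have hmeq : m = a * (c + 1) + (5 - a) * c := by rw [← hsum2, hsum]
      have hb : 5 - a + a = 5 := Nat.sub_add_cancel ha5
      have hmeq2 : m = 5 * c + a := by
        calc m = a * (c + 1) + (5 - a) * c := hmeq
          _ = (5 - a + a) * c + a := by ring
          _ = 5 * c + a := by rw [hb]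
      rcases Nat.lt_or_ge a 5 with ha4 | ha5'
      · have h1 : m / 5 = c := by omega
        have h2 : m % 5 = a := by omega
        rw [h1, h2]
        ring
      · have haa : a = 5 := by omega
        have h1 : m / 5 = c + 1 := by omega
        have h2 : m % 5 = 0 := by omega
        rw [haa, h1, h2]
        norm_num
        ring

end

/-- Let `Gk` be obtained from a graph `G` on `n` vertices by replacing each vertex `v`
by an iterated balanced blow-up `inner v` of `C5` on `5^k` vertices, joining classes of
distinct vertices completely or not at all according to adjacency in `G`. Then
`c5(Gk) = n · N(5^k) + 5^(5k) · c5(G)`. -/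
theorem c5_blowup_formula (n k : ℕ) (G : SimpleGraph (Fin n))
    (inner : Fin n → SimpleGraph (Fin (5 ^ k)))
    (hinner : ∀ v : Fin n, IsIterBalancedBlowupOf C5 (inner v))
    (Gk : SimpleGraph (Fin n × Fin (5 ^ k)))
    (hGk : ∀ p q : Fin n × Fin (5 ^ k),
      Gk.Adj p q ↔ (p.1 ≠ q.1 ∧ G.Adj p.1 q.1) ∨ (p.1 = q.1 ∧ (inner p.1).Adj p.2 q.2)) :
    c5 Gk = n * N (5 ^ k) + 5 ^ (5 * k) * c5 G := by
  classical
  have compat : ∀ p q : Fin n × Fin (5 ^ k), p.1 ≠ q.1 →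
      (Gk.Adj p q ↔ G.Adj p.1 q.1) := by
    intro p q hpq
    rw [hGk]
    tauto
  have hdec := decomp Gk G Prod.fst compat
  have hfib : ∀ v : Fin n, c5 (Gk.induce {p | p.1 = v}) = N (5 ^ k) := by
    intro v
    have hiso : Gk.induce {p | p.1 = v} ≃g inner v := by
      refine ⟨⟨fun p => p.1.2, fun x => ⟨(v, x), rfl⟩, fun p => ?_, fun x => rfl⟩, ?_⟩
      · apply Subtype.ext
        apply Prod.ext
        · exact (p.2 : p.1.1 = v).symm
        · rfl
      · intro a b
        have ha : (a : Fin n × Fin (5 ^ k)).1 = v := a.2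
        have hb : (b : Fin n × Fin (5 ^ k)).1 = v := b.2
        show (inner v).Adj _ _ ↔ Gk.Adj _ _
        rw [hGk]
        simp [ha, hb]
    rw [c5_iso hiso]
    obtain ⟨kd, hkd⟩ := hinner v
    rw [inner_count kd _ (inner v) hkd]
    simp [Nat.card_eq_fintype_card]
  have htrans : Nat.card ((t : Copies G) ×
      ((u : {u' // u' ∈ t.1}) → {p : Fin n × Fin (5 ^ k) // p.1 = u.1}))
      = 5 ^ (5 * k) * c5 G := by
    haveI : Fintype (Copies G) := Fintype.ofFinite _
    rw [natCard_sigma]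
    have hper : ∀ t : Copies G,
        Nat.card ((u : {u' // u' ∈ t.1}) → {p : Fin n × Fin (5 ^ k) // p.1 = u.1})
        = 5 ^ (5 * k) := by
      intro t
      rw [Nat.card_pi]
      have hcard : ∀ u : Fin n, Nat.card {p : Fin n × Fin (5 ^ k) // p.1 = u} = 5 ^ k := by
        intro u
        have e : {p : Fin n × Fin (5 ^ k) // p.1 = u} ≃ Fin (5 ^ k) :=
          ⟨fun p => p.1.2, fun x => ⟨(u, x), rfl⟩,
            fun p => Subtype.ext (Prod.ext p.2.symm rfl), fun x => rfl⟩
        rw [Nat.card_congr e]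
        simp [Nat.card_eq_fintype_card]
      rw [Finset.prod_congr rfl (fun u _ => hcard u.1), Finset.prod_const]
      rw [Finset.card_univ, Fintype.card_coe, t.2.1, ← pow_mul, mul_comm k 5]
    rw [Finset.sum_congr rfl (fun t _ => hper t), Finset.sum_const, smul_eq_mul,
      Finset.card_univ, ← Nat.card_eq_fintype_card, ← c5_eq_card_copies, mul_comm]
  rw [hdec, htrans, Finset.sum_congr rfl (fun v _ => hfib v), Finset.sum_const,
    smul_eq_mul, Finset.card_univ, Fintype.card_fin]
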